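/- With the hypotheses of the previous blockwise bound, if additionally c_θ · c_V > β², then λ_max(S) ≤ -c where c := ½(c_θ + c_V - √((c_θ - c_V)² + 4β²)) > 0; in particular S is negative definite. -/

import Mathlib

open Matrix Finset

/-- Euclidean norm of a finitely-indexed real vector. -/
noncomputable def euclNorm {n : Type*} [Fintype n] (x : n → ℝ) : ℝ :=
  Real.sqrt (∑ i, x i ^ 2)

/-- Largest eigenvalue of a (Hermitian = real symmetric) matrix. -/
noncomputable def lamMax {n : Type*} [Fintype n] [DecidableEq n] [Nonempty n]
    {A : Matrix n n ℝ} (hA : A.IsHermitian) : ℝ :=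
  ⨆ i, hA.eigenvalues i

/-- Operator 2-norm of a rectangular real matrix. -/
noncomputable def opNorm2 {m n : Type*} [Fintype m] [Fintype n] (C : Matrix m n ℝ) : ℝ :=
  sSup {r | ∃ x : n → ℝ, euclNorm x ≤ 1 ∧ r = euclNorm (C.mulVec x)}

section Aux

variable {n : Type*} [Fintype n]

lemma euclNorm_nonneg (x : n → ℝ) : 0 ≤ euclNorm x := Real.sqrt_nonneg _

lemma euclNorm_sq (x : n → ℝ) : euclNorm x ^ 2 = ∑ i, x i ^ 2 :=
  Real.sq_sqrt (by positivity)

lemma dotProduct_le_euclNorm (x w : n → ℝ) : x ⬝ᵥ w ≤ euclNorm x * euclNorm w := by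
  simpa [dotProduct, euclNorm] using Real.sum_mul_le_sqrt_mul_sqrt Finset.univ x w

lemma euclNorm_smul (c : ℝ) (x : n → ℝ) : euclNorm (c • x) = |c| * euclNorm x := by
  simp only [euclNorm, Pi.smul_apply, smul_eq_mul, mul_pow, ← Finset.mul_sum]
  rw [Real.sqrt_mul (sq_nonneg c), Real.sqrt_sq_eq_abs]

/-- Rayleigh upper bound. -/
lemma rayleigh_le {n : Type*} [Fintype n] [DecidableEq n] [Nonempty n]
    {A : Matrix n n ℝ} (hA : A.IsHermitian) (x : n → ℝ) :
    x ⬝ᵥ A *ᵥ x ≤ lamMax hA * ∑ i, x i ^ 2 := by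
  classical
  set U : Matrix n n ℝ := (hA.eigenvectorUnitary : Matrix n n ℝ) with hU
  set y : n → ℝ := x ᵥ* U with hy
  have hstar : star U = Uᵀ := by
    rw [Matrix.star_eq_conjTranspose, Matrix.conjTranspose_eq_transpose_of_trivial]
  have hUs : U * star U = 1 := (Matrix.mem_unitaryGroup_iff).mp hA.eigenvectorUnitary.2
  have hyy : ∀ w : n → ℝ, y ⬝ᵥ w = x ⬝ᵥ (U *ᵥ w) := fun w =>
    (dotProduct_mulVec x U w).symm
  have hnorm : ∑ i, y i ^ 2 = ∑ i, x i ^ 2 := by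
    have : y ⬝ᵥ y = x ⬝ᵥ x := by
      rw [hyy, hy, ← Matrix.mulVec_transpose, mulVec_mulVec, ← hstar, hUs, one_mulVec]
    simpa [dotProduct, sq] using this
  have hle : ∀ i, hA.eigenvalues i ≤ lamMax hA := fun i =>
    le_ciSup (Set.Finite.bddAbove (Set.finite_range _)) i
  have key : x ⬝ᵥ A *ᵥ x = ∑ i, hA.eigenvalues i * y i ^ 2 := by
    conv_lhs => rw [hA.spectral_theorem, Unitary.conjStarAlgAut_apply]
    rw [hstar, ← mulVec_mulVec, ← mulVec_mulVec, Matrix.mulVec_transpose, ← hy, ← hU, ← hyy]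
    simp only [dotProduct, mulVec_diagonal, Function.comp_apply]
    exact Finset.sum_congr rfl fun i _ => by simp only [RCLike.ofReal_real_eq_id, id]; ring
  rw [key, ← hnorm, Finset.mul_sum]
  exact Finset.sum_le_sum fun i _ => mul_le_mul_of_nonneg_right (hle i) (sq_nonneg _)

end Aux

lemma lamMax_le_of_forall {n : Type*} [Fintype n] [DecidableEq n] [Nonempty n]
    {A : Matrix n n ℝ} (hA : A.IsHermitian) (r : ℝ)
    (h : ∀ x : n → ℝ, x ⬝ᵥ A *ᵥ x ≤ r * ∑ i, x i ^ 2) : lamMax hA ≤ r := by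
  refine ciSup_le fun i => ?_
  have h1 : ‖hA.eigenvectorBasis i‖ = 1 := hA.eigenvectorBasis.orthonormal.1 i
  have hv : ∑ j, (hA.eigenvectorBasis i) j ^ 2 = 1 := by
    rw [EuclideanSpace.norm_eq] at h1
    have := Real.sqrt_eq_one.mp h1
    simpa [Real.norm_eq_abs, sq_abs] using this
  have heq : hA.eigenvalues i = (⇑(hA.eigenvectorBasis i)) ⬝ᵥ A *ᵥ ⇑(hA.eigenvectorBasis i) := by
    simpa using hA.eigenvalues_eq i
  rw [heq]
  calc _ ≤ r * ∑ j, (hA.eigenvectorBasis i) j ^ 2 := h _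
    _ = r := by rw [hv, mul_one]

lemma sum_sq_pos_of_ne_zero {n : Type*} [Fintype n] {x : n → ℝ} (hx : x ≠ 0) :
    0 < ∑ i, x i ^ 2 := by
  obtain ⟨i, hi⟩ : ∃ i, x i ≠ 0 := by
    by_contra h; push_neg at h; exact hx (funext h)
  exact Finset.sum_pos' (fun j _ => sq_nonneg _) ⟨i, Finset.mem_univ i, by positivity⟩

lemma euclNorm_mulVec_le {m n : Type*} [Fintype m] [Fintype n] (C : Matrix m n ℝ)
    {β : ℝ} (hC : opNorm2 C ≤ β) (y : n → ℝ) :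
    euclNorm (C *ᵥ y) ≤ β * euclNorm y := by
  classical
  have hbdd : BddAbove {r | ∃ x : n → ℝ, euclNorm x ≤ 1 ∧ r = euclNorm (C.mulVec x)} := by
    refine ⟨Real.sqrt (∑ i, ∑ j, C i j ^ 2), fun r hr => ?_⟩
    obtain ⟨x, hx1, rfl⟩ := hr
    have hx2 : ∑ j, x j ^ 2 ≤ 1 := by
      nlinarith [euclNorm_sq x, euclNorm_nonneg x]
    rw [euclNorm]
    apply Real.sqrt_le_sqrt
    calc ∑ i, (C *ᵥ x) i ^ 2
        ≤ ∑ i, (∑ j, C i j ^ 2) * ∑ j, x j ^ 2 := by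
          refine Finset.sum_le_sum fun i _ => ?_
          simpa [mulVec, dotProduct] using Finset.sum_mul_sq_le_sq_mul_sq Finset.univ (C i) x
      _ ≤ ∑ i, ∑ j, C i j ^ 2 := by
          refine Finset.sum_le_sum fun i _ => ?_
          exact mul_le_of_le_one_right (Finset.sum_nonneg fun j _ => sq_nonneg _) hx2
  by_cases hy : y = 0
  · have hmem0 : (0 : ℝ) ∈ {r | ∃ x : n → ℝ, euclNorm x ≤ 1 ∧ r = euclNorm (C.mulVec x)} :=
      ⟨0, by simp [euclNorm], by simp [euclNorm]⟩
    have hβ0 : 0 ≤ β := le_trans (le_csSup hbdd hmem0) hC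
    simp only [hy, Matrix.mulVec_zero]
    have h0 : euclNorm (0 : m → ℝ) = 0 := by simp [euclNorm]
    rw [h0]
    exact mul_nonneg hβ0 (euclNorm_nonneg _)
  · have ht : 0 < euclNorm y := Real.sqrt_pos.mpr (sum_sq_pos_of_ne_zero hy)
    set t := euclNorm y with htdef
    set u : n → ℝ := t⁻¹ • y with hu
    have hun : euclNorm u = 1 := by
      rw [hu, euclNorm_smul, abs_of_pos (inv_pos.mpr ht)]
      field_simp
      exact htdef.symm
    have hmem : euclNorm (C *ᵥ u) ∈
        {r | ∃ x : n → ℝ, euclNorm x ≤ 1 ∧ r = euclNorm (C.mulVec x)} :=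
      ⟨u, le_of_eq hun, rfl⟩
    have hle : euclNorm (C *ᵥ u) ≤ β := le_trans (le_csSup hbdd hmem) hC
    have hyu : y = t • u := by
      rw [hu, smul_smul, mul_inv_cancel₀ (ne_of_gt ht), one_smul]
    calc euclNorm (C *ᵥ y) = euclNorm (t • (C *ᵥ u)) := by rw [hyu, mulVec_smul]
      _ = t * euclNorm (C *ᵥ u) := by rw [euclNorm_smul, abs_of_pos ht]
      _ ≤ t * β := mul_le_mul_of_nonneg_left hle (le_of_lt ht)
      _ = β * t := mul_comm _ _

lemma scalar_key (cθ cV β : ℝ) (hcθ : 0 < cθ) (hcV : 0 < cV) (hβ : 0 ≤ β)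
    (hdet : cθ * cV > β^2) {a b : ℝ} (ha : 0 ≤ a) (hb : 0 ≤ b) :
    -cθ * a^2 + 2*(β*(a*b)) + -cV * b^2 ≤
      -((1/2) * (cθ + cV - Real.sqrt ((cθ - cV)^2 + 4*β^2))) * (a^2 + b^2) := by
  set D := Real.sqrt ((cθ - cV)^2 + 4*β^2) with hD
  have hD0 : 0 ≤ D := Real.sqrt_nonneg _
  have hD2 : D^2 = (cθ - cV)^2 + 4*β^2 := Real.sq_sqrt (by positivity)
  have habs : |cθ - cV| ≤ D := by
    rw [hD, ← Real.sqrt_sq_eq_abs]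
    exact Real.sqrt_le_sqrt (by nlinarith)
  obtain ⟨habs1, habs2⟩ := abs_le.mp habs
  have hp : 0 ≤ cθ - (1/2) * (cθ + cV - D) := by linarith
  have hq : 0 ≤ cV - (1/2) * (cθ + cV - D) := by linarith
  set p := cθ - (1/2) * (cθ + cV - D) with hpd
  set q := cV - (1/2) * (cθ + cV - D) with hqd
  have hpq : p * q = β^2 := by rw [hpd, hqd]; nlinarith [hD2]
  have hsp : Real.sqrt p ^ 2 = p := Real.sq_sqrt hp
  have hsq : Real.sqrt q ^ 2 = q := Real.sq_sqrt hq
  have hspq : Real.sqrt p * Real.sqrt q = β := by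
    rw [← Real.sqrt_mul hp, hpq, Real.sqrt_sq hβ]
  have expand : (Real.sqrt p * a - Real.sqrt q * b)^2 =
      (cθ - (1/2) * (cθ + cV - D)) * a^2 - 2*(β*(a*b)) + (cV - (1/2) * (cθ + cV - D)) * b^2 := by
    have h : (Real.sqrt p * a - Real.sqrt q * b)^2 =
        (Real.sqrt p)^2 * a^2 - 2*((Real.sqrt p * Real.sqrt q)*(a*b)) + (Real.sqrt q)^2 * b^2 := by
      ring
    rw [h, hsp, hsq, hspq, hpd, hqd]
  nlinarith [sq_nonneg (Real.sqrt p * a - Real.sqrt q * b), expand]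

lemma c_pos (cθ cV β : ℝ) (hcθ : 0 < cθ) (hcV : 0 < cV) (hβ : 0 ≤ β)
    (hdet : cθ * cV > β^2) :
    0 < (1/2) * (cθ + cV - Real.sqrt ((cθ - cV)^2 + 4*β^2)) := by
  have hD0 : 0 ≤ Real.sqrt ((cθ - cV)^2 + 4*β^2) := Real.sqrt_nonneg _
  have hD2 : Real.sqrt ((cθ - cV)^2 + 4*β^2) ^ 2 = (cθ - cV)^2 + 4*β^2 :=
    Real.sq_sqrt (by positivity)
  nlinarith [hD2, hD0]

theorem stmt1 {m n : ℕ} [NeZero m] [NeZero n]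
    (A : Matrix (Fin m) (Fin m) ℝ) (B : Matrix (Fin n) (Fin n) ℝ)
    (C : Matrix (Fin m) (Fin n) ℝ)
    (hA : A.IsHermitian) (hB : B.IsHermitian)
    (hS : (Matrix.fromBlocks A C Cᵀ B).IsHermitian)
    (cθ cV β : ℝ) (hcθ : 0 < cθ) (hcV : 0 < cV) (hβ : 0 ≤ β)
    (hAmax : lamMax hA ≤ -cθ) (hBmax : lamMax hB ≤ -cV)
    (hC : opNorm2 C ≤ β)
    (hdet : cθ * cV > β^2) :
    0 < (1/2) * (cθ + cV - Real.sqrt ((cθ - cV)^2 + 4*β^2)) ∧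
    lamMax hS ≤ -((1/2) * (cθ + cV - Real.sqrt ((cθ - cV)^2 + 4*β^2))) ∧
    (-(Matrix.fromBlocks A C Cᵀ B)).PosDef := by
  set c : ℝ := (1/2) * (cθ + cV - Real.sqrt ((cθ - cV)^2 + 4*β^2)) with hc
  have hcpos : 0 < c := c_pos cθ cV β hcθ hcV hβ hdet
  have quad : ∀ z : (Fin m ⊕ Fin n) → ℝ,
      z ⬝ᵥ (Matrix.fromBlocks A C Cᵀ B) *ᵥ z ≤ -c * ∑ i, z i ^ 2 := by
    intro z
    set x : Fin m → ℝ := z ∘ Sum.inl with hx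
    set y : Fin n → ℝ := z ∘ Sum.inr with hyd
    have hz : z = Sum.elim x y := by funext i; cases i <;> rfl
    have hsum : ∑ i, z i ^ 2 = (∑ i, x i ^ 2) + ∑ j, y j ^ 2 := by
      rw [hz]; rw [Fintype.sum_sum_type]; rfl
    have hquadeq : z ⬝ᵥ (Matrix.fromBlocks A C Cᵀ B) *ᵥ z
        = x ⬝ᵥ A *ᵥ x + 2 * (x ⬝ᵥ C *ᵥ y) + y ⬝ᵥ B *ᵥ y := by
      rw [hz, fromBlocks_mulVec, sumElim_dotProduct_sumElim, dotProduct_add, dotProduct_add]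
      simp only [Sum.elim_comp_inl, Sum.elim_comp_inr]
      have h1 : y ⬝ᵥ Cᵀ *ᵥ x = x ⬝ᵥ C *ᵥ y := by
        rw [dotProduct_mulVec, vecMul_transpose, dotProduct_comm]
      rw [h1]; ring
    have ha : 0 ≤ euclNorm x := euclNorm_nonneg x
    have hb : 0 ≤ euclNorm y := euclNorm_nonneg y
    have hxA : x ⬝ᵥ A *ᵥ x ≤ -cθ * ∑ i, x i ^ 2 :=
      (rayleigh_le hA x).trans
        (mul_le_mul_of_nonneg_right hAmax (Finset.sum_nonneg fun i _ => sq_nonneg _))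
    have hyB : y ⬝ᵥ B *ᵥ y ≤ -cV * ∑ j, y j ^ 2 :=
      (rayleigh_le hB y).trans
        (mul_le_mul_of_nonneg_right hBmax (Finset.sum_nonneg fun j _ => sq_nonneg _))
    have hxy : x ⬝ᵥ C *ᵥ y ≤ β * (euclNorm x * euclNorm y) := by
      calc x ⬝ᵥ C *ᵥ y ≤ euclNorm x * euclNorm (C *ᵥ y) := dotProduct_le_euclNorm _ _
        _ ≤ euclNorm x * (β * euclNorm y) :=
            mul_le_mul_of_nonneg_left (euclNorm_mulVec_le C hC y) ha
        _ = β * (euclNorm x * euclNorm y) := by ring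
    have hkey := scalar_key cθ cV β hcθ hcV hβ hdet ha hb
    rw [euclNorm_sq, euclNorm_sq] at hkey
    rw [hquadeq, hsum, ← hc] at *
    have h2 : 2 * (x ⬝ᵥ C *ᵥ y) ≤ 2 * (β * (euclNorm x * euclNorm y)) := by linarith
    calc x ⬝ᵥ A *ᵥ x + 2 * (x ⬝ᵥ C *ᵥ y) + y ⬝ᵥ B *ᵥ y
        ≤ -cθ * ∑ i, x i ^ 2 + 2 * (β * (euclNorm x * euclNorm y)) + -cV * ∑ j, y j ^ 2 := by
          linarith
      _ ≤ -c * ((∑ i, x i ^ 2) + ∑ j, y j ^ 2) := by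
          have := hkey; linarith [hkey]
  refine ⟨hcpos, ?_, ?_⟩
  · exact lamMax_le_of_forall hS (-c) fun z => by simpa using quad z
  · refine posDef_iff_dotProduct_mulVec.mpr ⟨hS.neg, fun z hz => ?_⟩
    have h1 : star z = z := by funext i; simp
    have h2 : 0 < ∑ i, z i ^ 2 := sum_sq_pos_of_ne_zero hz
    have h3 := quad z
    rw [h1, neg_mulVec, dotProduct_neg]
    nlinarith [h3, h2, hcpos]
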